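/- Define the UTD transition function F : (0,∞) → ℝ by F(x) = 2√x · √( (√(2π)/4 − ∫₀^{√x} cos(y²) dy)² + (√(2π)/4 − ∫₀^{√x} sin(y²) dy)² ), where the integrals are over the bounded interval [0,√x]. Then F(x) tends to 1 as x → ∞, i.e. lim_{x→∞} F(x) = 1. -/

import Mathlib

open Real

/-- The Kouyoumjian–Pathak (UTD) transition function, expressed via Fresnel integrals:
`F(x) = 2√x · √( (√(2π)/4 − ∫₀^{√x} cos(y²) dy)² + (√(2π)/4 − ∫₀^{√x} sin(y²) dy)² )`. -/
noncomputable def utdTransition (x : ℝ) : ℝ :=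
  2 * Real.sqrt x *
    Real.sqrt ((Real.sqrt (2 * π) / 4 - ∫ y in (0 : ℝ)..Real.sqrt x, Real.cos (y ^ 2)) ^ 2 +
      (Real.sqrt (2 * π) / 4 - ∫ y in (0 : ℝ)..Real.sqrt x, Real.sin (y ^ 2)) ^ 2)

section FresnelAux

open Complex MeasureTheory Filter Set Topology intervalIntegral

noncomputable def fre (c : ℂ) (y : ℝ) : ℂ := Complex.exp (c * (y:ℂ)^2)

lemma norm_fre_le {c : ℂ} (hre : c.re ≤ 0) (y : ℝ) : ‖fre c y‖ ≤ 1 := by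
  rw [fre, Complex.norm_exp]
  have : (c * (y:ℂ)^2).re = c.re * y^2 := by
    simp [Complex.mul_re, ← Complex.ofReal_pow]
  rw [this]
  exact Real.exp_le_one_iff.mpr (mul_nonpos_of_nonpos_of_nonneg hre (sq_nonneg y))

lemma continuous_fre (c : ℂ) : Continuous (fre c) := by
  unfold fre; fun_prop

lemma fre_deriv (c : ℂ) (hc : c ≠ 0) (k : ℕ) {y : ℝ} (hy : y ≠ 0) :
    HasDerivAt (fun y : ℝ => fre c y / (2*c*(y:ℂ)^(k+1)))
      (fre c y / (y:ℂ)^k - ((k:ℂ)+1) / (2*c) * (fre c y / (y:ℂ)^(k+2))) y := by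
  have hyc : (y:ℂ) ≠ 0 := Complex.ofReal_ne_zero.mpr hy
  have h1 : HasDerivAt (fun z : ℂ => Complex.exp (c * z^2) / (2*c*z^(k+1)))
      ((Complex.exp (c * (y:ℂ)^2) * (c * (2*(y:ℂ))) * (2*c*(y:ℂ)^(k+1))
        - Complex.exp (c * (y:ℂ)^2) * (2*c*((k+1) * (y:ℂ)^k))) / (2*c*(y:ℂ)^(k+1))^2) (y:ℂ) := by
    have hd : HasDerivAt (fun z : ℂ => Complex.exp (c * z^2)) (Complex.exp (c * (y:ℂ)^2) * (c * (2*(y:ℂ)))) (y:ℂ) := by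
      have : HasDerivAt (fun z : ℂ => c * z^2) (c * (2*(y:ℂ))) (y:ℂ) := by
        simpa using ((hasDerivAt_pow 2 (y:ℂ)).const_mul c)
      exact (Complex.hasDerivAt_exp _).comp _ this
    have hg : HasDerivAt (fun z : ℂ => 2*c*z^(k+1)) (2*c*((k+1) * (y:ℂ)^k)) (y:ℂ) := by
      simpa using ((hasDerivAt_pow (k+1) (y:ℂ)).const_mul (2*c))
    exact hd.div hg (by simp [hc, hyc])
  have h2 := h1.comp_ofReal
  convert h2 using 1
  · rfl
  have h2c : (2:ℂ)*c ≠ 0 := by simp [hc]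
  have hyk : (y:ℂ)^k ≠ 0 := pow_ne_zero _ hyc
  unfold fre
  field_simp [fre]
  ring

lemma fre_contOn (c : ℂ) (k : ℕ) {s : Set ℝ} (hs : (0:ℝ) ∉ s) :
    ContinuousOn (fun y : ℝ => fre c y / (y:ℂ)^k) s := by
  apply ((continuous_fre c).continuousOn).div
  · fun_prop
  · intro y hy
    exact pow_ne_zero _ (Complex.ofReal_ne_zero.mpr (fun h => hs (h ▸ hy)))

lemma fre_intOn {c : ℂ} (hre : c.re ≤ 0) {k : ℕ} (hk : 2 ≤ k) {a : ℝ} (ha : 0 < a) :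
    IntegrableOn (fun y : ℝ => fre c y / (y:ℂ)^k) (Ioi a) := by
  have hbd : IntegrableOn (fun y : ℝ => y ^ (-(k:ℝ))) (Ioi a) :=
    integrableOn_Ioi_rpow_of_lt (by
      have : (1:ℝ) < k := by exact_mod_cast lt_of_lt_of_le one_lt_two hk
      linarith) ha
  apply Integrable.mono' hbd
  · exact ((fre_contOn c k (by simp [not_lt, ha.le])).aestronglyMeasurable measurableSet_Ioi)
  · filter_upwards [ae_restrict_mem measurableSet_Ioi] with y hy
    have hy0 : 0 < y := ha.trans hy
    rw [norm_div, norm_pow, Complex.norm_real, Real.norm_eq_abs, abs_of_pos hy0,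
      Real.rpow_neg hy0.le, Real.rpow_natCast]
    rw [div_eq_mul_inv]
    exact mul_le_of_le_one_left (by positivity) (norm_fre_le hre y)

lemma fre_intervalInt (c : ℂ) (k : ℕ) {a b : ℝ} (ha : 0 < a) (hb : a ≤ b) :
    IntervalIntegrable (fun y : ℝ => fre c y / (y:ℂ)^k) volume a b := by
  apply ContinuousOn.intervalIntegrable
  apply fre_contOn
  rw [Set.uIcc_of_le hb]
  intro h
  exact absurd h.1 (by linarith)

set_option maxHeartbeats 1000000 in
lemma keyIBP {c : ℂ} (hc : c ≠ 0) (hre : c.re ≤ 0) (k : ℕ) {a : ℝ} (ha : 0 < a) :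
    Tendsto (fun R => ∫ y in a..R, fre c y / (y:ℂ)^k) atTop
      (𝓝 (-(fre c a / (2*c*(a:ℂ)^(k+1))) + ((k:ℂ)+1) / (2*c) * ∫ y in Ioi a, fre c y / (y:ℂ)^(k+2))) := by
  have key : ∀ R, a ≤ R → ∫ y in a..R, fre c y / (y:ℂ)^k
      = (fre c R / (2*c*(R:ℂ)^(k+1)) - fre c a / (2*c*(a:ℂ)^(k+1)))
        + ((k:ℂ)+1) / (2*c) * ∫ y in a..R, fre c y / (y:ℂ)^(k+2) := by
    intro R hR
    have hibp : ∫ y in a..R, (fre c y / (y:ℂ)^k - ((k:ℂ)+1) / (2*c) * (fre c y / (y:ℂ)^(k+2)))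
        = fre c R / (2*c*(R:ℂ)^(k+1)) - fre c a / (2*c*(a:ℂ)^(k+1)) := by
      apply intervalIntegral.integral_eq_sub_of_hasDerivAt
      · intro y hy
        rw [Set.uIcc_of_le hR] at hy
        exact fre_deriv c hc k (by linarith [hy.1] : y ≠ 0)
      · apply IntervalIntegrable.sub (fre_intervalInt c k ha hR)
        exact ((fre_intervalInt c (k+2) ha hR).const_mul _)
    have hsplit : ∫ y in a..R, (fre c y / (y:ℂ)^k - ((k:ℂ)+1) / (2*c) * (fre c y / (y:ℂ)^(k+2)))
        = (∫ y in a..R, fre c y / (y:ℂ)^k) - ((k:ℂ)+1) / (2*c) * ∫ y in a..R, fre c y / (y:ℂ)^(k+2) := by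
      rw [intervalIntegral.integral_sub (fre_intervalInt c k ha hR)
        ((fre_intervalInt c (k+2) ha hR).const_mul _), intervalIntegral.integral_const_mul]
    rw [hsplit] at hibp
    linear_combination hibp
  have h1 : Tendsto (fun R => fre c R / (2*c*(R:ℂ)^(k+1))) atTop (𝓝 0) := by
    apply squeeze_zero_norm' (a := fun R => (2*‖c‖)⁻¹ * (R^(k+1))⁻¹)
    · filter_upwards [eventually_gt_atTop 0] with R hR
      have hc0 : ‖c‖ ≠ 0 := norm_ne_zero_iff.mpr hc
      have hR0 : (R:ℝ)^(k+1) ≠ 0 := by positivity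
      have hnorm : ‖(2*c*(R:ℂ)^(k+1))‖ = 2*‖c‖*R^(k+1) := by
        rw [norm_mul, norm_mul, norm_pow, Complex.norm_real, Real.norm_eq_abs, abs_of_pos hR]
        norm_num
      rw [norm_div, hnorm, div_le_iff₀ (by positivity)]
      calc ‖fre c R‖ ≤ 1 := norm_fre_le hre R
        _ = (2*‖c‖)⁻¹ * (R^(k+1))⁻¹ * (2*‖c‖*R^(k+1)) := by
            field_simp
    · rw [← mul_zero ((2*‖c‖)⁻¹)]
      exact (tendsto_inv_atTop_zero.comp (tendsto_pow_atTop (Nat.succ_ne_zero k))).const_mul _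
  have h2 : Tendsto (fun R => ∫ y in a..R, fre c y / (y:ℂ)^(k+2)) atTop
      (𝓝 (∫ y in Ioi a, fre c y / (y:ℂ)^(k+2))) :=
    intervalIntegral_tendsto_integral_Ioi a (fre_intOn hre (by omega) ha) tendsto_id
  have := ((h1.sub_const (fre c a / (2*c*(a:ℂ)^(k+1)))).add (h2.const_mul (((k:ℂ)+1) / (2*c))))
  rw [zero_sub] at this
  apply this.congr'
  filter_upwards [eventually_ge_atTop a] with R hR
  exact (key R hR).symm

lemma cpow_piI : ((π:ℂ) * Complex.I) ^ (1/2 : ℂ)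
    = ((Real.sqrt (2*π)/2 : ℝ) : ℂ) * (1 + Complex.I) := by
  have hπ : (0:ℝ) < π := Real.pi_pos
  have hne : ((π:ℂ) * Complex.I) ≠ 0 := by
    simp [Real.pi_ne_zero, Complex.I_ne_zero, Complex.ofReal_ne_zero]
  rw [Complex.cpow_def_of_ne_zero hne, Complex.log_ofReal_mul hπ Complex.I_ne_zero,
    Complex.log_I]
  have h1 : ((Real.log π : ℂ) + ↑π / 2 * Complex.I) * (1/2)
      = (↑(Real.log π * (1/2)) : ℂ) + ↑(π/4) * Complex.I := by push_cast; ring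
  rw [h1, Complex.exp_add, ← Complex.ofReal_exp, Complex.exp_mul_I,
    ← Complex.ofReal_cos, ← Complex.ofReal_sin]
  have h2 : Real.exp (Real.log π * (1/2)) = Real.sqrt π := by
    rw [Real.sqrt_eq_rpow, Real.rpow_def_of_pos hπ]
  have h3 : Real.cos (π/4) = Real.sqrt 2 / 2 := Real.cos_pi_div_four
  have h4 : Real.sin (π/4) = Real.sqrt 2 / 2 := Real.sin_pi_div_four
  have h5 : Real.sqrt (2*π) = Real.sqrt 2 * Real.sqrt π := Real.sqrt_mul (by norm_num) π
  rw [h2, h3, h4, h5]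
  push_cast
  ring

lemma Ire : (Complex.I).re ≤ 0 := by simp

lemma fresnel_tendsto :
    Tendsto (fun R => ∫ y in (0:ℝ)..R, fre Complex.I y) atTop
      (𝓝 (((Real.sqrt (2*π)/4 : ℝ) : ℂ) * (1 + Complex.I))) := by
  set l : Filter ℝ := 𝓝[>] (0:ℝ) with hl
  set c : ℝ → ℂ := fun ε => Complex.I - (ε:ℂ) with hcdef
  have hcne : ∀ ε : ℝ, c ε ≠ 0 := by
    intro ε h
    have : (c ε).im = 1 := by simp [hcdef]
    rw [h] at this; simp at this
  have hcre : ∀ ε : ℝ, 0 ≤ ε → (c ε).re ≤ 0 := by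
    intro ε hε; simp [hcdef]; linarith
  set J : ℂ := ∫ y in Ioi (1:ℝ), fre Complex.I y / (y:ℂ)^2 with hJ
  set A : ℂ := (∫ y in (0:ℝ)..1, fre Complex.I y)
      + (-(fre Complex.I 1 / (2*Complex.I)) + 1/(2*Complex.I) * J) with hA
  -- tail limit identity as a function of c
  have tail : ∀ d : ℂ, d ≠ 0 → d.re ≤ 0 →
      Tendsto (fun R => ∫ y in (1:ℝ)..R, fre d y) atTop
        (𝓝 (-(fre d 1 / (2*d)) + 1/(2*d) * ∫ y in Ioi (1:ℝ), fre d y / (y:ℂ)^2)) := by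
    intro d hd hdre
    have := keyIBP hd hdre 0 (a := 1) one_pos
    simp only [pow_zero, div_one, pow_one, Nat.cast_zero, zero_add, Complex.ofReal_one,
      mul_one] at this
    exact this
  -- Step 1
  have step1 : Tendsto (fun R => ∫ y in (0:ℝ)..R, fre Complex.I y) atTop (𝓝 A) := by
    have h2 := tail Complex.I Complex.I_ne_zero Ire
    have := (tendsto_const_nhds (x := ∫ y in (0:ℝ)..1, fre Complex.I y) (f := atTop)).add h2
    apply this.congr'
    filter_upwards [eventually_ge_atTop (1:ℝ)] with R hR
    exact intervalIntegral.integral_add_adjacent_intervals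
      ((continuous_fre _).intervalIntegrable _ _) ((continuous_fre _).intervalIntegrable _ _)
  -- Step 2+3: identity for ε > 0
  have ident : ∀ ε : ℝ, 0 < ε →
      ((π:ℂ)/((ε:ℂ) - Complex.I))^(1/2:ℂ)/2
        = (∫ y in (0:ℝ)..1, fre (c ε) y)
          + (-(fre (c ε) 1 / (2*(c ε))) + 1/(2*(c ε)) * ∫ y in Ioi (1:ℝ), fre (c ε) y / (y:ℂ)^2) := by
    intro ε hε
    have hb : 0 < ((ε:ℂ) - Complex.I).re := by simpa using hε
    have hgauss := integral_gaussian_complex_Ioi hb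
    have hfun : ∀ x : ℝ, Complex.exp (-((ε:ℂ) - Complex.I) * (x:ℂ)^2) = fre (c ε) x := by
      intro x; simp only [fre, hcdef]; ring_nf
    rw [show (fun x : ℝ => Complex.exp (-((ε:ℂ) - Complex.I) * (x:ℂ)^2)) = fre (c ε) from funext hfun] at hgauss
    have hint : Integrable (fun x : ℝ => fre (c ε) x) := by
      have := integrable_cexp_neg_mul_sq hb
      rwa [show (fun x : ℝ => Complex.exp (-((ε:ℂ) - Complex.I) * (x:ℂ)^2)) = fre (c ε) from funext hfun] at this
    have hsplit : ∫ y in Ioi (0:ℝ), fre (c ε) y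
        = (∫ y in Ioc (0:ℝ) 1, fre (c ε) y) + ∫ y in Ioi (1:ℝ), fre (c ε) y := by
      rw [← MeasureTheory.setIntegral_union (Ioc_disjoint_Ioi le_rfl) measurableSet_Ioi
        hint.integrableOn hint.integrableOn, Ioc_union_Ioi_eq_Ioi zero_le_one]
    have htail : ∫ y in Ioi (1:ℝ), fre (c ε) y
        = -(fre (c ε) 1 / (2*(c ε))) + 1/(2*(c ε)) * ∫ y in Ioi (1:ℝ), fre (c ε) y / (y:ℂ)^2 :=
      tendsto_nhds_unique (intervalIntegral_tendsto_integral_Ioi 1 hint.integrableOn tendsto_id)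
        (tail (c ε) (hcne ε) (hcre ε hε.le))
    rw [← hgauss, hsplit, htail, intervalIntegral.integral_of_le zero_le_one]
  -- limits as ε → 0+
  have hctend : Tendsto c l (𝓝 Complex.I) := by
    have hcont : Continuous c := by rw [hcdef]; fun_prop
    have h0 : Tendsto c l (𝓝 (c 0)) := (hcont.tendsto 0).mono_left nhdsWithin_le_nhds
    simpa [hcdef] using h0
  have hexp : ∀ y : ℝ, Tendsto (fun ε => fre (c ε) y) l (𝓝 (fre Complex.I y)) := by
    intro y
    have hcont : Continuous (fun d : ℂ => Complex.exp (d * (y:ℂ)^2)) := by fun_prop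
    exact (hcont.tendsto _).comp hctend
  have t1 : Tendsto (fun ε => ∫ y in (0:ℝ)..1, fre (c ε) y) l
      (𝓝 (∫ y in (0:ℝ)..1, fre Complex.I y)) := by
    apply intervalIntegral.tendsto_integral_filter_of_dominated_convergence
      (bound := fun _ : ℝ => (1:ℝ))
    · exact Eventually.of_forall fun ε => ((continuous_fre _).aestronglyMeasurable).restrict
    · filter_upwards [self_mem_nhdsWithin] with ε (hε : ε ∈ Ioi (0:ℝ))
      exact Eventually.of_forall fun y _ => norm_fre_le (hcre ε (le_of_lt hε)) y
    · exact intervalIntegrable_const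
    · exact Eventually.of_forall fun y _ => hexp y
  have t2a : Tendsto (fun ε => -(fre (c ε) 1 / (2 * c ε))) l
      (𝓝 (-(fre Complex.I 1 / (2*Complex.I)))) := by
    apply Tendsto.neg
    exact (hexp 1).div (hctend.const_mul 2) (by simp [Complex.I_ne_zero])
  have tinv : Tendsto (fun ε => 1/(2 * c ε)) l (𝓝 (1/(2*Complex.I))) :=
    tendsto_const_nhds.div (hctend.const_mul 2) (by simp [Complex.I_ne_zero])
  have t2b : Tendsto (fun ε => ∫ y in Ioi (1:ℝ), fre (c ε) y/(y:ℂ)^2) l (𝓝 J) := by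
    apply MeasureTheory.tendsto_integral_filter_of_dominated_convergence
      (bound := fun y : ℝ => y^(-2:ℝ))
    · exact Eventually.of_forall fun ε =>
        ((fre_contOn (c ε) 2 (by simp [not_lt])).aestronglyMeasurable measurableSet_Ioi)
    · filter_upwards [self_mem_nhdsWithin] with ε (hε : ε ∈ Ioi (0:ℝ))
      filter_upwards [ae_restrict_mem measurableSet_Ioi] with y hy
      have hy0 : (0:ℝ) < y := lt_trans one_pos hy
      rw [norm_div, norm_pow, Complex.norm_real, Real.norm_eq_abs, abs_of_pos hy0,
        Real.rpow_neg hy0.le, div_eq_mul_inv]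
      calc ‖fre (c ε) y‖ * ((y:ℝ)^2)⁻¹ ≤ 1 * ((y:ℝ)^2)⁻¹ := by
            gcongr; exact norm_fre_le (hcre ε (le_of_lt (mem_Ioi.mp hε))) y
        _ = (y ^ (2:ℝ))⁻¹ := by rw [one_mul, Real.rpow_two]
    · exact integrableOn_Ioi_rpow_of_lt (by norm_num) one_pos
    · filter_upwards [ae_restrict_mem measurableSet_Ioi] with y hy
      exact (hexp y).div_const _
  have t2 : Tendsto (fun ε => (∫ y in (0:ℝ)..1, fre (c ε) y)
      + (-(fre (c ε) 1 / (2*(c ε))) + 1/(2*(c ε)) * ∫ y in Ioi (1:ℝ), fre (c ε) y / (y:ℂ)^2))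
      l (𝓝 A) := t1.add (t2a.add (tinv.mul t2b))
  have t3 : Tendsto (fun ε : ℝ => ((π:ℂ)/((ε:ℂ) - Complex.I))^(1/2:ℂ)/2) l
      (𝓝 (((π:ℂ)*Complex.I)^(1/2:ℂ)/2)) := by
    have hbase : Tendsto (fun ε : ℝ => (π:ℂ)/((ε:ℂ) - Complex.I)) l (𝓝 ((π:ℂ)*Complex.I)) := by
      have hden : Tendsto (fun ε : ℝ => ((ε:ℂ) - Complex.I)) l (𝓝 (-Complex.I)) := by
        have hcont : Continuous (fun ε : ℝ => ((ε:ℂ) - Complex.I)) := by fun_prop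
        have h0 : Tendsto (fun ε : ℝ => ((ε:ℂ) - Complex.I)) l (𝓝 ((0:ℝ) - Complex.I)) :=
          (hcont.tendsto 0).mono_left nhdsWithin_le_nhds
        simpa using h0
      have hd := Tendsto.div (tendsto_const_nhds (x := (π:ℂ))) hden (by simp [Complex.I_ne_zero])
      have : (π:ℂ) / (-Complex.I) = (π:ℂ) * Complex.I := by
        rw [div_neg, div_I]; ring
      rwa [this] at hd
    have hcont : ContinuousAt (fun z : ℂ => z ^ (1/2:ℂ)) ((π:ℂ)*Complex.I) := by
      apply continuousAt_cpow_const
      rw [Complex.mem_slitPlane_iff]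
      right
      simp [Real.pi_ne_zero]
    exact ((hcont.tendsto).comp hbase).div_const 2
  have hAeq : A = ((π:ℂ)*Complex.I)^(1/2:ℂ)/2 := by
    refine tendsto_nhds_unique ?_ t3
    apply t2.congr'
    filter_upwards [self_mem_nhdsWithin] with ε (hε : ε ∈ Ioi (0:ℝ))
    exact (ident ε hε).symm
  have hval : ((π:ℂ)*Complex.I)^(1/2:ℂ)/2 = ((Real.sqrt (2*π)/4 : ℝ) : ℂ) * (1 + Complex.I) := by
    rw [cpow_piI]; push_cast; ring
  rw [hAeq, hval] at step1
  exact step1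

noncomputable def L0 : ℂ := ((Real.sqrt (2*π)/4 : ℝ) : ℂ) * (1 + Complex.I)

lemma tail_repr {t : ℝ} (ht : 0 < t) :
    L0 - ∫ y in (0:ℝ)..t, fre Complex.I y
      = -(fre Complex.I t / (2*Complex.I*(t:ℂ))) +
        1/(2*Complex.I) * ∫ y in Ioi t, fre Complex.I y / (y:ℂ)^2 := by
  have h1 := keyIBP Complex.I_ne_zero Ire 0 ht
  simp only [pow_zero, div_one, pow_one, Nat.cast_zero, zero_add] at h1
  have h2 : Tendsto (fun R => ∫ y in t..R, fre Complex.I y) atTop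
      (𝓝 (L0 - ∫ y in (0:ℝ)..t, fre Complex.I y)) := by
    have heq : ∀ R : ℝ, ∫ y in t..R, fre Complex.I y
        = (∫ y in (0:ℝ)..R, fre Complex.I y) - ∫ y in (0:ℝ)..t, fre Complex.I y := fun R =>
      (intervalIntegral.integral_interval_sub_left
        ((continuous_fre _).intervalIntegrable _ _) ((continuous_fre _).intervalIntegrable _ _)).symm
    rw [funext heq]
    exact fresnel_tendsto.sub_const _
  exact tendsto_nhds_unique h2 h1

lemma tail2 {t : ℝ} (ht : 0 < t) :
    ∫ y in Ioi t, fre Complex.I y / (y:ℂ)^2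
      = -(fre Complex.I t / (2*Complex.I*(t:ℂ)^3)) +
        3/(2*Complex.I) * ∫ y in Ioi t, fre Complex.I y / (y:ℂ)^4 := by
  have h1 := keyIBP Complex.I_ne_zero Ire 2 ht
  have h2 := intervalIntegral_tendsto_integral_Ioi t (fre_intOn Ire le_rfl ht) tendsto_id
  have := tendsto_nhds_unique h2 h1
  rw [this]
  norm_num

lemma norm_int4 {t : ℝ} (ht : 0 < t) :
    ‖∫ y in Ioi t, fre Complex.I y / (y:ℂ)^4‖ ≤ ((t:ℝ)^3)⁻¹/3 := by
  have hb : IntegrableOn (fun y : ℝ => y^(-4:ℝ)) (Ioi t) :=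
    integrableOn_Ioi_rpow_of_lt (by norm_num) ht
  have h : ‖∫ y in Ioi t, fre Complex.I y / (y:ℂ)^4‖ ≤ ∫ y in Ioi t, y^(-4:ℝ) := by
    apply MeasureTheory.norm_integral_le_of_norm_le hb
    filter_upwards [ae_restrict_mem measurableSet_Ioi] with y hy
    have hy0 : 0 < y := ht.trans hy
    rw [norm_div, norm_pow, Complex.norm_real, Real.norm_eq_abs, abs_of_pos hy0,
      Real.rpow_neg hy0.le, div_eq_mul_inv]
    calc ‖fre Complex.I y‖ * ((y:ℝ)^4)⁻¹ ≤ 1 * ((y:ℝ)^4)⁻¹ := by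
          gcongr; exact norm_fre_le Ire y
      _ = (y ^ (4:ℝ))⁻¹ := by
          rw [one_mul, show (4:ℝ) = ((4:ℕ):ℝ) by norm_num, Real.rpow_natCast]
  refine h.trans ?_
  rw [integral_Ioi_rpow_of_lt (by norm_num) ht]
  rw [show (-4:ℝ)+1 = -((3:ℕ):ℝ) by norm_num, Real.rpow_neg ht.le, Real.rpow_natCast]
  push_cast
  linarith [inv_nonneg.mpr (pow_nonneg ht.le 3)]

lemma norm_tail2 {t : ℝ} (ht : 0 < t) :
    ‖∫ y in Ioi t, fre Complex.I y / (y:ℂ)^2‖ ≤ ((t:ℝ)^3)⁻¹ := by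
  rw [tail2 ht]
  have e1 : ‖-(fre Complex.I t / (2*Complex.I*(t:ℂ)^3))‖ ≤ ((t:ℝ)^3)⁻¹/2 := by
    rw [norm_neg, norm_div]
    have : ‖2*Complex.I*(t:ℂ)^3‖ = 2*t^3 := by
      rw [norm_mul, norm_mul, norm_pow, Complex.norm_real, Real.norm_eq_abs, abs_of_pos ht]
      simp
    rw [this, div_le_iff₀ (by positivity)]
    calc ‖fre Complex.I t‖ ≤ 1 := norm_fre_le Ire t
      _ = ((t:ℝ)^3)⁻¹/2 * (2*t^3) := by field_simp
  have e2 : ‖3/(2*Complex.I) * ∫ y in Ioi t, fre Complex.I y / (y:ℂ)^4‖ ≤ ((t:ℝ)^3)⁻¹/2 := by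
    rw [norm_mul, norm_div]
    have h3 : ‖(3:ℂ)‖ = 3 := by norm_num
    have h2i : ‖(2:ℂ)*Complex.I‖ = 2 := by simp
    rw [h3, h2i]
    calc (3/2) * ‖∫ y in Ioi t, fre Complex.I y / (y:ℂ)^4‖
        ≤ (3/2) * (((t:ℝ)^3)⁻¹/3) := by gcongr; exact norm_int4 ht
      _ = ((t:ℝ)^3)⁻¹/2 := by ring
  calc ‖_ + _‖ ≤ _ := norm_add_le _ _
    _ ≤ ((t:ℝ)^3)⁻¹/2 + ((t:ℝ)^3)⁻¹/2 := add_le_add e1 e2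
    _ = ((t:ℝ)^3)⁻¹ := by ring

lemma key_bound {t : ℝ} (ht : 0 < t) :
    ‖2*(t:ℂ)*(L0 - ∫ y in (0:ℝ)..t, fre Complex.I y) - Complex.I * fre Complex.I t‖
      ≤ 1/t^2 := by
  have htne : (t:ℂ) ≠ 0 := Complex.ofReal_ne_zero.mpr ht.ne'
  have heq : 2*(t:ℂ)*(L0 - ∫ y in (0:ℝ)..t, fre Complex.I y) - Complex.I * fre Complex.I t
      = (t:ℂ)/Complex.I * ∫ y in Ioi t, fre Complex.I y / (y:ℂ)^2 := by
    rw [tail_repr ht, mul_add, mul_neg]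
    have h1 : 2*(t:ℂ)*(fre Complex.I t/(2*Complex.I*(t:ℂ))) = Complex.I⁻¹ * fre Complex.I t := by
      field_simp
    have h2 : 2*(t:ℂ)*(1/(2*Complex.I) * ∫ y in Ioi t, fre Complex.I y / (y:ℂ)^2)
        = (t:ℂ)/Complex.I * ∫ y in Ioi t, fre Complex.I y / (y:ℂ)^2 := by
      rw [one_div, div_eq_mul_inv, mul_inv]
      ring
    rw [h1, h2, Complex.inv_I]
    ring
  rw [heq, norm_mul, norm_div, Complex.norm_real, Real.norm_eq_abs, abs_of_pos ht,
    Complex.norm_I, div_one]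
  calc t * ‖∫ y in Ioi t, fre Complex.I y / (y:ℂ)^2‖ ≤ t * ((t:ℝ)^3)⁻¹ := by
        gcongr; exact norm_tail2 ht
    _ = 1/t^2 := by field_simp

end FresnelAux

section FresnelAux2

open Complex MeasureTheory Filter Set Topology intervalIntegral

lemma int_decomp (t : ℝ) :
    (∫ y in (0:ℝ)..t, fre Complex.I y)
      = ((∫ y in (0:ℝ)..t, Real.cos (y^2) : ℝ) : ℂ)
        + ((∫ y in (0:ℝ)..t, Real.sin (y^2) : ℝ) : ℂ) * Complex.I := by
  have hfun : ∀ y : ℝ, fre Complex.I y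
      = ((Real.cos (y^2) : ℝ) : ℂ) + ((Real.sin (y^2) : ℝ) : ℂ) * Complex.I := by
    intro y
    rw [fre, show Complex.I * (y:ℂ)^2 = ((y^2 : ℝ) : ℂ) * Complex.I by push_cast; ring,
      Complex.exp_mul_I, ← Complex.ofReal_cos, ← Complex.ofReal_sin]
  simp only [hfun]
  rw [intervalIntegral.integral_add (Continuous.intervalIntegrable (by fun_prop) _ _) (Continuous.intervalIntegrable (by fun_prop) _ _)]
  rw [intervalIntegral.integral_mul_const, intervalIntegral.integral_ofReal,
    intervalIntegral.integral_ofReal]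

lemma utd_eq_norm {x : ℝ} (hx : 0 ≤ x) :
    utdTransition x = ‖2*((Real.sqrt x : ℝ):ℂ)*(L0 - ∫ y in (0:ℝ)..Real.sqrt x, fre Complex.I y)‖ := by
  set t := Real.sqrt x with htdef
  set a : ℝ := Real.sqrt (2*π)/4 - ∫ y in (0:ℝ)..t, Real.cos (y^2) with hadef
  set b : ℝ := Real.sqrt (2*π)/4 - ∫ y in (0:ℝ)..t, Real.sin (y^2) with hbdef
  have hz : L0 - ∫ y in (0:ℝ)..t, fre Complex.I y = (a:ℂ) + (b:ℂ)*Complex.I := by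
    rw [int_decomp, L0, hadef, hbdef]
    push_cast
    ring
  rw [hz, norm_mul, norm_mul]
  have h1 : ‖((a:ℝ):ℂ) + (b:ℂ)*Complex.I‖ = Real.sqrt (a^2 + b^2) := by
    rw [Complex.norm_def, Complex.normSq_apply]
    simp only [Complex.add_re, Complex.add_im, Complex.ofReal_re, Complex.ofReal_im,
      Complex.mul_re, Complex.mul_im, Complex.I_re, Complex.I_im]
    congr 1
    ring
  rw [h1, Complex.norm_real, Real.norm_eq_abs, _root_.abs_of_nonneg (Real.sqrt_nonneg x)]
  simp only [Complex.norm_ofNat]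
  rw [utdTransition]

/-- The UTD transition function tends to `1` as its argument tends to `∞`. -/
theorem utdTransition_tendsto_one :
    Filter.Tendsto utdTransition Filter.atTop (nhds 1) := by
  have key : ∀ x : ℝ, 1 ≤ x → |utdTransition x - 1| ≤ 1/x := by
    intro x hx
    have hx0 : (0:ℝ) < x := lt_of_lt_of_le one_pos hx
    have ht : 0 < Real.sqrt x := Real.sqrt_pos.mpr hx0
    rw [utd_eq_norm hx0.le]
    set z := 2*((Real.sqrt x : ℝ):ℂ)*(L0 - ∫ y in (0:ℝ)..Real.sqrt x, fre Complex.I y)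
    have hw : ‖Complex.I * fre Complex.I (Real.sqrt x)‖ = 1 := by
      rw [norm_mul, Complex.norm_I, one_mul]
      rw [fre, Complex.norm_exp]
      have : (Complex.I * ((Real.sqrt x:ℝ):ℂ)^2).re = 0 := by
        simp [Complex.mul_re, ← Complex.ofReal_pow]
      rw [this, Real.exp_zero]
    have := abs_norm_sub_norm_le z (Complex.I * fre Complex.I (Real.sqrt x))
    rw [hw] at this
    refine this.trans ((key_bound ht).trans ?_)
    rw [Real.sq_sqrt hx0.le]
  have h0 : Tendsto (fun x : ℝ => utdTransition x - 1) atTop (𝓝 0) := by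
    apply squeeze_zero_norm' (a := fun x : ℝ => 1/x)
    · filter_upwards [eventually_ge_atTop (1:ℝ)] with x hx
      exact key x hx
    · simpa using tendsto_inv_atTop_zero
  have := h0.add_const 1
  simpa using this

end FresnelAux2
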